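/- Let X be a real Hilbert space, x₀ ∈ X, r₀ > 0, Y a Banach space, and let f : B(x₀; r₀) → Y be a C¹ map such that f'(x) is a continuous linear isomorphism of X onto Y for every x ∈ B(x₀; r₀). Let (D_Φ, Φ) be the maximal auxiliary flow for f at x₀, and assume condition (c): for every closed set B bounded in B(x₀; r₀) and every x ∈ B, if Φ(x,t) ∈ B for all t ≥ 0 with (x,t) ∈ D_Φ, then [0,∞) ⊆ I_x. Then the following two conditions are equivalent: (a) f is injective on B(x₀; r₀) and f(B(x₀; r)) is star-shaped with respect to f(x₀) for every 0 < r ≤ r₀; (b) ⟨x − x₀, f'(x)⁻¹(f(x) − f(x₀))⟩ ≥ 0 for all x ∈ B(x₀; r₀), where ⟨·,·⟩ is the inner product of X. -/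

import Mathlib

open Set Filter Topology

/-- `f : D → Y` is a local homeomorphism on the open set `D` if every point of `D` has an
open neighbourhood `U ⊆ D` such that `f(U)` is open and `f|U : U → f(U)` is a
homeomorphism. -/
def IsLocalHomeoOn {X Y : Type*} [TopologicalSpace X] [TopologicalSpace Y]
    (f : X → Y) (D : Set X) : Prop :=
  ∀ x ∈ D, ∃ U : Set X, U ⊆ D ∧ IsOpen U ∧ x ∈ U ∧ IsOpen (f '' U) ∧
    ContinuousOn f U ∧ ∃ g : Y → X, ContinuousOn g (f '' U) ∧
      (∀ u ∈ U, g (f u) = u) ∧ ∀ y ∈ f '' U, g y ∈ U ∧ f (g y) = y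

/-- The maximal auxiliary flow `Φ : D_Φ → D` for a map `f : D → Y` at the point `x₀`:
`D_Φ ⊆ D × ℝ` is open, each section `I_x = {t : (x,t) ∈ D_Φ}` is an interval containing
`0`, `Φ(x,0) = x`, the flow law `Φ(Φ(x,t₁),t₂) = Φ(x,t₁+t₂)` holds,
`f(Φ(x,t)) = f(x₀) + e^{-t}(f(x) - f(x₀))` on `D_Φ`, and `Φ` is maximal among such
liftings. -/
structure AuxFlow {X Y : Type*} [NormedAddCommGroup X] [NormedSpace ℝ X]
    [NormedAddCommGroup Y] [NormedSpace ℝ Y]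
    (D : Set X) (f : X → Y) (x₀ : X) where
  dom : Set (X × ℝ)
  flow : X → ℝ → X
  isOpen_dom : IsOpen dom
  dom_subset : ∀ p ∈ dom, p.1 ∈ D
  zero_mem : ∀ x ∈ D, (x, (0 : ℝ)) ∈ dom
  interval : ∀ x ∈ D, Set.OrdConnected {t : ℝ | (x, t) ∈ dom}
  mem_of_dom : ∀ p ∈ dom, flow p.1 p.2 ∈ D
  continuousOn : ContinuousOn (fun p : X × ℝ => flow p.1 p.2) dom
  flow_zero : ∀ x ∈ D, flow x 0 = x
  flow_add : ∀ (x : X) (t₁ t₂ : ℝ), (x, t₁) ∈ dom → (x, t₁ + t₂) ∈ dom →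
    (flow x t₁, t₂) ∈ dom ∧ flow (flow x t₁) t₂ = flow x (t₁ + t₂)
  lifts : ∀ p ∈ dom, f (flow p.1 p.2) = f x₀ + Real.exp (-p.2) • (f p.1 - f x₀)
  maximal : ∀ x ∈ D, ∀ J : Set ℝ, J.OrdConnected → (0 : ℝ) ∈ J →
    ∀ ψ : ℝ → X, ContinuousOn ψ J → ψ 0 = x →
    (∀ t ∈ J, ψ t ∈ D ∧ f (ψ t) = f x₀ + Real.exp (-t) • (f x - f x₀)) →
    ∀ t ∈ J, (x, t) ∈ dom ∧ ψ t = flow x t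

section Aux

variable {X Y : Type*} [NormedAddCommGroup X] [InnerProductSpace ℝ X] [CompleteSpace X]
  [NormedAddCommGroup Y] [NormedSpace ℝ Y] [CompleteSpace Y]
  {x₀ : X} {r₀ : ℝ} {f : X → Y} {f' : X → (X ≃L[ℝ] Y)}

private lemma aux_strict
    (hdf : ∀ x ∈ Metric.ball x₀ r₀, HasFDerivAt f (f' x : X →L[ℝ] Y) x)
    (hC1 : ContinuousOn (fun x : X => ((f' x : X →L[ℝ] Y))) (Metric.ball x₀ r₀))
    {x : X} (hx : x ∈ Metric.ball x₀ r₀) :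
    HasStrictFDerivAt f (f' x : X →L[ℝ] Y) x :=
  hasStrictFDerivAt_of_hasFDerivAt_of_continuousAt
    (Filter.eventually_of_mem (Metric.isOpen_ball.mem_nhds hx) hdf)
    (hC1.continuousAt (Metric.isOpen_ball.mem_nhds hx))

private lemma aux_flow_contAt {D : Set X} {g : X → Y} {c : X}
    (F : AuxFlow D g c) {x : X} {t : ℝ} (h : (x, t) ∈ F.dom) :
    ContinuousAt (fun s => F.flow x s) t :=
  (F.continuousOn.continuousAt (F.isOpen_dom.mem_nhds h)).comp
    ((continuous_const.prodMk continuous_id).continuousAt)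

private lemma aux_flow_deriv
    (hdf : ∀ x ∈ Metric.ball x₀ r₀, HasFDerivAt f (f' x : X →L[ℝ] Y) x)
    (hC1 : ContinuousOn (fun x : X => ((f' x : X →L[ℝ] Y))) (Metric.ball x₀ r₀))
    (F : AuxFlow (Metric.ball x₀ r₀) f x₀) {x : X} {t : ℝ} (hxt : (x, t) ∈ F.dom) :
    HasDerivAt (fun s => F.flow x s)
      (-((f' (F.flow x t)).symm (f (F.flow x t) - f x₀))) t := by
  set p := F.flow x t with hp
  have hpD : p ∈ Metric.ball x₀ r₀ := F.mem_of_dom _ hxt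
  have hs : HasStrictFDerivAt f (f' p : X →L[ℝ] Y) p := aux_strict hdf hC1 hpD
  set g : Y → X := hs.localInverse f (f' p) p with hgdef
  have hgfd : HasFDerivAt g ((f' p).symm : Y →L[ℝ] X) (f p) := hs.to_localInverse.hasFDerivAt
  set c : ℝ → Y := fun s => f x₀ + Real.exp (-s) • (f x - f x₀) with hcdef
  have hexp : HasDerivAt (fun s : ℝ => Real.exp (-s)) (-Real.exp (-t)) t := by
    have h := (Real.hasDerivAt_exp (-t)).comp t (hasDerivAt_neg t)
    simp only [mul_neg, mul_one] at h
    exact h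
  have hcder : HasDerivAt c ((-Real.exp (-t)) • (f x - f x₀)) t := by
    simpa [hcdef] using (hexp.smul_const (f x - f x₀)).const_add (f x₀)
  have hct : c t = f p := (F.lifts _ hxt).symm
  have hcomp : HasDerivAt (fun s => g (c s))
      (((f' p).symm : Y →L[ℝ] X) ((-Real.exp (-t)) • (f x - f x₀))) t := by
    refine HasFDerivAt.comp_hasDerivAt t ?_ hcder
    rw [hct]; exact hgfd
  have hdomev : ∀ᶠ s in 𝓝 t, (x, s) ∈ F.dom :=
    (F.isOpen_dom.preimage (continuous_const.prodMk continuous_id)).mem_nhds hxt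
  have h2 : ∀ᶠ s in 𝓝 t, g (f (F.flow x s)) = F.flow x s :=
    (aux_flow_contAt F hxt).eventually hs.eventually_left_inverse
  have heq : (fun s => F.flow x s) =ᶠ[𝓝 t] (fun s => g (c s)) := by
    filter_upwards [hdomev, h2] with s h1 h2'
    have hls := F.lifts (x, s) h1
    simp only [hcdef]
    rw [← hls, h2']
  have hval : ((f' p).symm : Y →L[ℝ] X) ((-Real.exp (-t)) • (f x - f x₀))
      = -((f' p).symm (f p - f x₀)) := by
    have hfp : f p - f x₀ = Real.exp (-t) • (f x - f x₀) := by
      rw [F.lifts _ hxt]; abel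
    rw [hfp]
    simp [neg_smul]
  rw [← hval]
  exact hcomp.congr_of_eventuallyEq heq

private lemma aux_anti
    (hdf : ∀ x ∈ Metric.ball x₀ r₀, HasFDerivAt f (f' x : X →L[ℝ] Y) x)
    (hC1 : ContinuousOn (fun x : X => ((f' x : X →L[ℝ] Y))) (Metric.ball x₀ r₀))
    (F : AuxFlow (Metric.ball x₀ r₀) f x₀)
    (hb : ∀ z ∈ Metric.ball x₀ r₀, (0 : ℝ) ≤ inner ℝ (z - x₀) ((f' z).symm (f z - f x₀)))
    {x : X} (hx : x ∈ Metric.ball x₀ r₀)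
    {t₁ t₂ : ℝ} (h1 : (x, t₁) ∈ F.dom) (h2 : (x, t₂) ∈ F.dom) (h12 : t₁ ≤ t₂) :
    ‖F.flow x t₂ - x₀‖ ≤ ‖F.flow x t₁ - x₀‖ := by
  set I : Set ℝ := {t | (x, t) ∈ F.dom} with hI
  have hIopen : IsOpen I := F.isOpen_dom.preimage (continuous_const.prodMk continuous_id)
  have hIconv : Convex ℝ I := convex_iff_ordConnected.mpr (F.interval x hx)
  set g : ℝ → ℝ := fun s => (inner ℝ (F.flow x s - x₀) (F.flow x s - x₀) : ℝ) with hg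
  have hder : ∀ t ∈ I, HasDerivAt g
      (2 * (inner ℝ (F.flow x t - x₀) (-((f' (F.flow x t)).symm (f (F.flow x t) - f x₀))) : ℝ)) t := by
    intro t ht
    have hF := aux_flow_deriv hdf hC1 F ht
    have hu := hF.sub_const x₀
    have h := hu.inner ℝ hu
    refine h.congr_deriv ?_
    rw [real_inner_comm]
    ring
  have hanti : AntitoneOn g I := by
    refine antitoneOn_of_deriv_nonpos hIconv
      (fun t ht => ((hder t ht).continuousAt).continuousWithinAt) ?_ ?_
    · intro t ht
      rw [hIopen.interior_eq] at ht
      exact ((hder t ht).differentiableAt).differentiableWithinAt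
    · intro t ht
      rw [hIopen.interior_eq] at ht
      rw [(hder t ht).deriv]
      have hp := F.mem_of_dom _ ht
      have hbp := hb _ hp
      rw [inner_neg_right]
      nlinarith [hbp]
  have hle : g t₂ ≤ g t₁ := hanti h1 h2 h12
  simp only [hg, real_inner_self_eq_norm_mul_norm] at hle
  nlinarith [norm_nonneg (F.flow x t₂ - x₀), norm_nonneg (F.flow x t₁ - x₀)]

private lemma aux_glob
    (hdf : ∀ x ∈ Metric.ball x₀ r₀, HasFDerivAt f (f' x : X →L[ℝ] Y) x)
    (hC1 : ContinuousOn (fun x : X => ((f' x : X →L[ℝ] Y))) (Metric.ball x₀ r₀))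
    (F : AuxFlow (Metric.ball x₀ r₀) f x₀)
    (hc : ∀ B : Set X, IsClosed B → Bornology.IsBounded B → B ⊆ Metric.ball x₀ r₀ →
      ∀ x ∈ B, (∀ t : ℝ, 0 ≤ t → (x, t) ∈ F.dom → F.flow x t ∈ B) →
        ∀ t : ℝ, 0 ≤ t → (x, t) ∈ F.dom)
    (hb : ∀ z ∈ Metric.ball x₀ r₀, (0 : ℝ) ≤ inner ℝ (z - x₀) ((f' z).symm (f z - f x₀)))
    {x : X} (hx : x ∈ Metric.ball x₀ r₀) :
    ∀ t : ℝ, 0 ≤ t → (x, t) ∈ F.dom := by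
  have hxc : x ∈ Metric.closedBall x₀ ‖x - x₀‖ := by
    simp [Metric.mem_closedBall, dist_eq_norm]
  refine hc (Metric.closedBall x₀ ‖x - x₀‖) Metric.isClosed_closedBall
    Metric.isBounded_closedBall (Metric.closedBall_subset_ball ?_) x hxc ?_
  · rw [← dist_eq_norm]; exact Metric.mem_ball.mp hx
  · intro t ht hdom
    rw [Metric.mem_closedBall, dist_eq_norm]
    have h0 : (x, (0 : ℝ)) ∈ F.dom := F.zero_mem x hx
    have h := aux_anti hdf hC1 F hb hx h0 hdom ht
    rwa [F.flow_zero x hx] at h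

private lemma aux_inj (hr₀ : 0 < r₀)
    (hdf : ∀ x ∈ Metric.ball x₀ r₀, HasFDerivAt f (f' x : X →L[ℝ] Y) x)
    (hC1 : ContinuousOn (fun x : X => ((f' x : X →L[ℝ] Y))) (Metric.ball x₀ r₀))
    (F : AuxFlow (Metric.ball x₀ r₀) f x₀)
    (hc : ∀ B : Set X, IsClosed B → Bornology.IsBounded B → B ⊆ Metric.ball x₀ r₀ →
      ∀ x ∈ B, (∀ t : ℝ, 0 ≤ t → (x, t) ∈ F.dom → F.flow x t ∈ B) →
        ∀ t : ℝ, 0 ≤ t → (x, t) ∈ F.dom)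
    (hb : ∀ z ∈ Metric.ball x₀ r₀, (0 : ℝ) ≤ inner ℝ (z - x₀) ((f' z).symm (f z - f x₀))) :
    Set.InjOn f (Metric.ball x₀ r₀) := by
  have hx₀D : x₀ ∈ Metric.ball x₀ r₀ := Metric.mem_ball_self hr₀
  have hs : HasStrictFDerivAt f (f' x₀ : X →L[ℝ] Y) x₀ := aux_strict hdf hC1 hx₀D
  set e := hs.toOpenPartialHomeomorph f with he
  have hcoe : (e : X → Y) = f := rfl
  have hx₀s : x₀ ∈ e.source := hs.mem_toOpenPartialHomeomorph_source
  have hfx₀t : f x₀ ∈ e.target := hs.image_mem_toOpenPartialHomeomorph_target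
  have hmem : e.source ∩ Metric.ball x₀ r₀ ∈ 𝓝 x₀ :=
    Filter.inter_mem (e.open_source.mem_nhds hx₀s) (Metric.isOpen_ball.mem_nhds hx₀D)
  obtain ⟨ρ, hρpos, hρ⟩ := Metric.mem_nhds_iff.mp hmem
  set ε := ρ / 3 with hεdef
  have hεpos : 0 < ε := by positivity
  have hball2 : Metric.ball x₀ (2 * ε) ⊆ e.source ∩ Metric.ball x₀ r₀ := by
    refine subset_trans (Metric.ball_subset_ball ?_) hρ
    rw [hεdef]; linarith
  have hsymm0 : e.symm (f x₀) = x₀ := by exact e.left_inv hx₀s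
  have hsymmc : ContinuousAt e.symm (f x₀) := e.continuousAt_symm hfx₀t
  obtain ⟨η₁, hη₁pos, hη₁⟩ := Metric.continuousAt_iff.mp hsymmc (ε / 4) (by positivity)
  obtain ⟨η₂, hη₂pos, hη₂⟩ := Metric.isOpen_iff.mp e.open_target _ hfx₀t
  set η := min η₁ η₂ with hηdef
  have hηpos : 0 < η := lt_min hη₁pos hη₂pos
  have hηtgt : Metric.ball (f x₀) η ⊆ e.target :=
    subset_trans (Metric.ball_subset_ball (min_le_right _ _)) hη₂
  have hηsymm : ∀ y ∈ Metric.ball (f x₀) η, e.symm y ∈ Metric.ball x₀ (ε / 4) := by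
    intro y hy
    have h1 : dist y (f x₀) < η₁ :=
      lt_of_lt_of_le (Metric.mem_ball.mp hy) (min_le_left _ _)
    have h2 := hη₁ h1
    rw [hsymm0] at h2
    exact Metric.mem_ball.mpr h2
  -- shadow lemma
  have hSH : ∀ w, w ∈ Metric.ball x₀ ε → f w ∈ Metric.ball (f x₀) η →
      ∀ s : ℝ, 0 ≤ s → (w, s) ∈ F.dom ∧ F.flow w s ∈ Metric.ball x₀ (ε / 4) := by
    intro w hw hfw s hs0
    have hw2 : w ∈ Metric.ball x₀ (2 * ε) := Metric.ball_subset_ball (by linarith) hw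
    have hwD : w ∈ Metric.ball x₀ r₀ := (hball2 hw2).2
    have hws : w ∈ e.source := (hball2 hw2).1
    set ψ : ℝ → X := fun s => e.symm (f x₀ + Real.exp (-s) • (f w - f x₀)) with hψdef
    have hcurve : ∀ s ∈ Ici (0:ℝ),
        (f x₀ + Real.exp (-s) • (f w - f x₀)) ∈ Metric.ball (f x₀) η := by
      intro s hs
      rw [Metric.mem_ball, dist_eq_norm, add_sub_cancel_left, norm_smul, Real.norm_eq_abs,
        Real.abs_exp]
      have h1 : Real.exp (-s) ≤ 1 := Real.exp_le_one_iff.mpr (by simpa using hs)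
      have h2 : ‖f w - f x₀‖ < η := by rw [← dist_eq_norm]; exact hfw
      have h3 : 0 < Real.exp (-s) := Real.exp_pos _
      nlinarith [norm_nonneg (f w - f x₀)]
    have hψcont : ContinuousOn ψ (Ici 0) := by
      refine e.continuousOn_symm.comp ?_ ?_
      · exact (continuous_const.add ((Real.continuous_exp.comp continuous_neg).smul
          continuous_const)).continuousOn
      · exact fun s hs => hηtgt (hcurve s hs)
    have hψ0 : ψ 0 = w := by
      simp only [hψdef, neg_zero, Real.exp_zero, one_smul, add_sub_cancel]
      exact e.left_inv hws
    have hcond : ∀ s ∈ Ici (0:ℝ), ψ s ∈ Metric.ball x₀ r₀ ∧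
        f (ψ s) = f x₀ + Real.exp (-s) • (f w - f x₀) := by
      intro s hs
      have h1 := hηsymm _ (hcurve s hs)
      refine ⟨(hball2 (Metric.ball_subset_ball (by linarith) h1)).2, ?_⟩
      exact e.right_inv (hηtgt (hcurve s hs))
    have hmax := F.maximal w hwD (Ici 0) ordConnected_Ici (mem_Ici.mpr le_rfl) ψ hψcont hψ0
      hcond s (mem_Ici.mpr hs0)
    refine ⟨hmax.1, ?_⟩
    rw [← hmax.2]
    exact hηsymm _ (hcurve s (mem_Ici.mpr hs0))
  -- tails of good orbits
  have hGoodTail : ∀ z ∈ Metric.ball x₀ r₀,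
      (∃ t : ℝ, 0 ≤ t ∧ F.flow z t ∈ Metric.ball x₀ ε ∧
        f (F.flow z t) ∈ Metric.ball (f x₀) η) →
      ∃ t₀ : ℝ, 0 ≤ t₀ ∧ ∀ u : ℝ, t₀ ≤ u → F.flow z u ∈ Metric.ball x₀ (ε / 4) := by
    rintro z hz ⟨t, ht0, h1, h2⟩
    refine ⟨t, ht0, fun u hu => ?_⟩
    have hd1 : (z, t) ∈ F.dom := aux_glob hdf hC1 F hc hb hz t ht0
    have hd2 : (z, t + (u - t)) ∈ F.dom := aux_glob hdf hC1 F hc hb hz _ (by linarith)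
    obtain ⟨hd3, hfadd⟩ := F.flow_add z t (u - t) hd1 hd2
    have h4 := (hSH _ h1 h2 (u - t) (by linarith)).2
    rw [hfadd] at h4
    have h5 : t + (u - t) = u := by ring
    rwa [h5] at h4
  have hfcont : ContinuousOn f (Metric.ball x₀ r₀) := fun z hz =>
    ((hdf z hz).continuousAt).continuousWithinAt
  -- every point is good
  have hAllGood : ∀ x ∈ Metric.ball x₀ r₀,
      ∃ t : ℝ, 0 ≤ t ∧ F.flow x t ∈ Metric.ball x₀ ε ∧
        f (F.flow x t) ∈ Metric.ball (f x₀) η := by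
    intro x hx
    by_contra hnot
    set P : ℝ → X := fun lam => x₀ + lam • (x - x₀) with hPdef
    have hPc : Continuous P := continuous_const.add (continuous_id.smul continuous_const)
    have hPD : ∀ lam ∈ Icc (0:ℝ) 1, P lam ∈ Metric.ball x₀ r₀ := by
      intro lam hlam
      rw [Metric.mem_ball, dist_eq_norm]
      have h1 : ‖P lam - x₀‖ = |lam| * ‖x - x₀‖ := by
        simp [hPdef, norm_smul, Real.norm_eq_abs]
      rw [h1]
      have h2 : |lam| ≤ 1 := abs_le.mpr ⟨by linarith [hlam.1], hlam.2⟩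
      have h3 : ‖x - x₀‖ < r₀ := by rw [← dist_eq_norm]; exact hx
      nlinarith [norm_nonneg (x - x₀), abs_nonneg lam]
    have hGood0 : ∃ t : ℝ, 0 ≤ t ∧ F.flow x₀ t ∈ Metric.ball x₀ ε ∧
        f (F.flow x₀ t) ∈ Metric.ball (f x₀) η := by
      refine ⟨0, le_rfl, ?_, ?_⟩
      · rw [F.flow_zero x₀ hx₀D]; exact Metric.mem_ball_self hεpos
      · rw [F.flow_zero x₀ hx₀D]; exact Metric.mem_ball_self hηpos
    set C : Set ℝ := {lam | lam ∈ Icc (0:ℝ) 1 ∧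
      ¬ ∃ t : ℝ, 0 ≤ t ∧ F.flow (P lam) t ∈ Metric.ball x₀ ε ∧
        f (F.flow (P lam) t) ∈ Metric.ball (f x₀) η} with hCdef
    have hP1 : P 1 = x := by simp [hPdef]
    have hC1' : (1:ℝ) ∈ C := by
      refine ⟨⟨zero_le_one, le_rfl⟩, ?_⟩
      rw [hP1]; exact hnot
    have hCne : C.Nonempty := ⟨1, hC1'⟩
    have hCbdd : BddBelow C := ⟨0, fun c hc => hc.1.1⟩
    set lam' : ℝ := sInf C with hlam'def
    have hlam'0 : 0 ≤ lam' := le_csInf hCne (fun c hc => hc.1.1)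
    have hlam'1 : lam' ≤ 1 := csInf_le hCbdd hC1'
    have hopen : ∀ lam : ℝ, lam ∈ Icc (0:ℝ) 1 →
        (∃ t : ℝ, 0 ≤ t ∧ F.flow (P lam) t ∈ Metric.ball x₀ ε ∧
          f (F.flow (P lam) t) ∈ Metric.ball (f x₀) η) →
        ∀ᶠ mu in 𝓝 lam, ∃ t : ℝ, 0 ≤ t ∧ F.flow (P mu) t ∈ Metric.ball x₀ ε ∧
          f (F.flow (P mu) t) ∈ Metric.ball (f x₀) η := by
      rintro lam hlam ⟨t, ht0, h1, h2⟩
      have hdom : (P lam, t) ∈ F.dom := aux_glob hdf hC1 F hc hb (hPD lam hlam) t ht0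
      have hflc : ContinuousAt (fun mu => F.flow (P mu) t) lam := by
        have h3 : ContinuousAt (fun p : X × ℝ => F.flow p.1 p.2) (P lam, t) :=
          F.continuousOn.continuousAt (F.isOpen_dom.mem_nhds hdom)
        have h4 : ContinuousAt (fun mu : ℝ => ((P mu, t) : X × ℝ)) lam :=
          (hPc.prodMk continuous_const).continuousAt
        exact h3.comp (x := lam) h4
      have hfl2 : ContinuousAt (fun mu => f (F.flow (P mu) t)) lam := by
        have h4 : ContinuousAt f (F.flow (P lam) t) :=
          (hdf _ (F.mem_of_dom _ hdom)).continuousAt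
        exact h4.comp (x := lam) hflc
      have e1 : ∀ᶠ mu in 𝓝 lam, F.flow (P mu) t ∈ Metric.ball x₀ ε :=
        hflc.eventually_mem (Metric.isOpen_ball.mem_nhds h1)
      have e2 : ∀ᶠ mu in 𝓝 lam, f (F.flow (P mu) t) ∈ Metric.ball (f x₀) η :=
        hfl2.eventually_mem (Metric.isOpen_ball.mem_nhds h2)
      filter_upwards [e1, e2] with mu he1 he2
      exact ⟨t, ht0, he1, he2⟩
    have hnotg' : ¬ ∃ t : ℝ, 0 ≤ t ∧ F.flow (P lam') t ∈ Metric.ball x₀ ε ∧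
        f (F.flow (P lam') t) ∈ Metric.ball (f x₀) η := by
      intro hg
      have hev := hopen lam' ⟨hlam'0, hlam'1⟩ hg
      obtain ⟨δ, hδpos, hδ⟩ := Metric.eventually_nhds_iff.mp hev
      obtain ⟨c, hcC, hclt⟩ := (csInf_lt_iff hCbdd hCne).mp
        (show sInf C < lam' + δ from by
          have h9 : sInf C = lam' := hlam'def.symm
          rw [h9]; linarith)
      have hcge : lam' ≤ c := csInf_le hCbdd hcC
      have hgc := hδ (show dist c lam' < δ by
        rw [Real.dist_eq, abs_of_nonneg (by linarith)]
        linarith)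
      exact hcC.2 hgc
    have hlam'pos : 0 < lam' := by
      rcases eq_or_lt_of_le hlam'0 with h | h
      · exfalso
        apply hnotg'
        have hP0 : P lam' = x₀ := by simp [hPdef, ← h]
        rw [hP0]; exact hGood0
      · exact h
    have hgoodlt : ∀ lam, 0 ≤ lam → lam < lam' →
        ∃ t : ℝ, 0 ≤ t ∧ F.flow (P lam) t ∈ Metric.ball x₀ ε ∧
          f (F.flow (P lam) t) ∈ Metric.ball (f x₀) η := by
      intro lam h0 hlt
      by_contra hng
      have hmem3 : lam ∈ C := ⟨⟨h0, by linarith⟩, hng⟩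
      have h10 : lam' ≤ lam := by
        have := csInf_le hCbdd hmem3
        rw [← hlam'def] at this
        exact this
      linarith
    -- uniform bound on ‖f (P lam) - f x₀‖
    have hfPc : ContinuousOn (fun lam => ‖f (P lam) - f x₀‖) (Icc (0:ℝ) 1) := by
      refine ContinuousOn.norm (ContinuousOn.sub ?_ continuousOn_const)
      exact hfcont.comp hPc.continuousOn (fun lam hlam => hPD lam hlam)
    obtain ⟨lamM, _, hM'⟩ := isCompact_Icc.exists_isMaxOn
      (⟨0, left_mem_Icc.mpr zero_le_one⟩ : (Icc (0:ℝ) 1).Nonempty) hfPc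
    have hM := isMaxOn_iff.mp hM'
    set M := ‖f (P lamM) - f x₀‖ + 1 with hMdef
    have hMbig : ∀ lam ∈ Icc (0:ℝ) 1, ‖f (P lam) - f x₀‖ < M := by
      intro lam h
      have := hM lam h
      rw [hMdef]; linarith
    have htendM : Tendsto (fun t : ℝ => Real.exp (-t) * M) atTop (𝓝 0) := by
      simpa using Real.tendsto_exp_neg_atTop_nhds_zero.mul_const M
    obtain ⟨T₂', hT₂'⟩ := eventually_atTop.mp (htendM.eventually_lt_const hηpos)
    set T₂ := max T₂' 0 with hT₂def
    have hT₂0 : 0 ≤ T₂ := le_max_right _ _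
    have hfval : ∀ lam ∈ Icc (0:ℝ) 1, ∀ t : ℝ, T₂ ≤ t →
        f (F.flow (P lam) t) ∈ Metric.ball (f x₀) η := by
      intro lam hlam t ht
      have ht0 : 0 ≤ t := le_trans hT₂0 ht
      have hdom := aux_glob hdf hC1 F hc hb (hPD lam hlam) t ht0
      rw [Metric.mem_ball, dist_eq_norm, F.lifts _ hdom]
      have h6 : f x₀ + Real.exp (-t) • (f (P lam) - f x₀) - f x₀
          = Real.exp (-t) • (f (P lam) - f x₀) := by abel
      rw [h6, norm_smul, Real.norm_eq_abs, Real.abs_exp]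
      have h1 : Real.exp (-t) * M < η := hT₂' t (le_trans (le_max_left _ _) ht)
      have h2 := hMbig lam hlam
      have h3 : 0 < Real.exp (-t) := Real.exp_pos _
      nlinarith
    have hlam'Icc : lam' ∈ Icc (0:ℝ) 1 := ⟨hlam'0, hlam'1⟩
    have hfar : ∀ t : ℝ, 0 ≤ t → ε ≤ ‖F.flow (P lam') t - x₀‖ := by
      have hfar2 : ∀ t : ℝ, T₂ ≤ t → ε ≤ ‖F.flow (P lam') t - x₀‖ := by
        intro t ht
        by_contra hlt
        push_neg at hlt
        apply hnotg'
        exact ⟨t, le_trans hT₂0 ht,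
          Metric.mem_ball.mpr (by rw [dist_eq_norm]; exact hlt),
          hfval lam' hlam'Icc t ht⟩
      intro t ht0
      have h1 := hfar2 (max t T₂) (le_max_right _ _)
      have h2 := aux_anti hdf hC1 F hb (hPD lam' hlam'Icc)
        (aux_glob hdf hC1 F hc hb (hPD _ hlam'Icc) t ht0)
        (aux_glob hdf hC1 F hc hb (hPD _ hlam'Icc) _
          (le_trans ht0 (le_max_left _ _)))
        (le_max_left t T₂)
      linarith
    have htube : ∀ᶠ lam in 𝓝 lam', ∀ t ∈ Icc (0:ℝ) T₂,
        ε / 2 < ‖F.flow (P lam) t - x₀‖ := by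
      refine isCompact_Icc.eventually_forall_of_forall_eventually ?_
      intro t ht
      have hdom := aux_glob hdf hC1 F hc hb (hPD lam' hlam'Icc) t ht.1
      have hcont : ContinuousAt (fun q : ℝ × ℝ => ‖F.flow (P q.1) q.2 - x₀‖) (lam', t) := by
        have h3 : ContinuousAt (fun p : X × ℝ => F.flow p.1 p.2) (P lam', t) :=
          F.continuousOn.continuousAt (F.isOpen_dom.mem_nhds hdom)
        have h4 : Continuous (fun q : ℝ × ℝ => (P q.1, q.2)) := by
          refine Continuous.prodMk ?_ continuous_snd
          exact continuous_const.add (continuous_fst.smul continuous_const)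
        exact ((h3.comp (x := ((lam', t) : ℝ × ℝ)) h4.continuousAt).sub continuousAt_const).norm
      have hgt : ε / 2 < ‖F.flow (P lam') t - x₀‖ :=
        lt_of_lt_of_le (by linarith) (hfar t ht.1)
      exact hcont.eventually_const_lt hgt
    obtain ⟨δ₂, hδ₂pos, hδ₂⟩ := Metric.eventually_nhds_iff.mp htube
    set d := min δ₂ lam' with hddef
    have hdpos : 0 < d := lt_min hδ₂pos hlam'pos
    set lam1 := lam' - d / 2 with hlam1def
    have hdle : d ≤ lam' := min_le_right _ _
    have hlam10 : 0 ≤ lam1 := by rw [hlam1def]; linarith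
    have hlam1lt : lam1 < lam' := by rw [hlam1def]; linarith
    have hlam1Icc : lam1 ∈ Icc (0:ℝ) 1 := ⟨hlam10, by linarith⟩
    have hgood1 := hgoodlt lam1 hlam10 hlam1lt
    have htube1 : ∀ t ∈ Icc (0:ℝ) T₂, ε / 2 < ‖F.flow (P lam1) t - x₀‖ := by
      apply hδ₂
      rw [Real.dist_eq]
      have h7 : lam1 - lam' = -(d / 2) := by rw [hlam1def]; ring
      rw [h7, abs_neg, abs_of_nonneg (by linarith)]
      have h11 : d ≤ δ₂ := by rw [hddef]; exact min_le_left _ _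
      linarith
    obtain ⟨t₀, ht₀0, ht₀⟩ := hGoodTail (P lam1) (hPD lam1 hlam1Icc) hgood1
    set τ := max t₀ T₂ with hτdef
    have hφcont : ContinuousOn (fun t => ‖F.flow (P lam1) t - x₀‖) (Icc T₂ τ) := by
      intro t ht
      have hdom := aux_glob hdf hC1 F hc hb (hPD lam1 hlam1Icc) t (le_trans hT₂0 ht.1)
      exact (((aux_flow_contAt F hdom).sub continuousAt_const).norm).continuousWithinAt
    have hφτ : ‖F.flow (P lam1) τ - x₀‖ < ε / 4 := by
      have h8 := ht₀ τ (le_max_left _ _)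
      rw [Metric.mem_ball, dist_eq_norm] at h8
      exact h8
    have hφT₂ : ε / 2 < ‖F.flow (P lam1) T₂ - x₀‖ := htube1 T₂ ⟨hT₂0, le_rfl⟩
    have hIVT := intermediate_value_Icc' (le_max_right t₀ T₂) hφcont
    have hmem2 : (ε / 2) ∈ Icc (‖F.flow (P lam1) τ - x₀‖) (‖F.flow (P lam1) T₂ - x₀‖) :=
      ⟨by linarith, by linarith⟩
    obtain ⟨σ, hσIcc, hσ⟩ := hIVT hmem2
    have hσT₂ : T₂ ≤ σ := hσIcc.1
    have hznorm : ‖F.flow (P lam1) σ - x₀‖ = ε / 2 := hσ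
    have hzsrc : F.flow (P lam1) σ ∈ e.source := by
      refine (hball2 ?_).1
      rw [Metric.mem_ball, dist_eq_norm, hznorm]
      linarith
    have hfz : f (F.flow (P lam1) σ) ∈ Metric.ball (f x₀) η := hfval lam1 hlam1Icc σ hσT₂
    have hzsmall : F.flow (P lam1) σ ∈ Metric.ball x₀ (ε / 4) := by
      have h5 := hηsymm _ hfz
      have h6 : e.symm (f (F.flow (P lam1) σ)) = F.flow (P lam1) σ := by
        exact e.left_inv hzsrc
      rwa [h6] at h5
    rw [Metric.mem_ball, dist_eq_norm, hznorm] at hzsmall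
    linarith
  -- conclude injectivity
  intro x₁ hx₁ x₂ hx₂ hf12
  obtain ⟨t₁, ht₁0, ht₁⟩ := hGoodTail x₁ hx₁ (hAllGood x₁ hx₁)
  obtain ⟨t₂, ht₂0, ht₂⟩ := hGoodTail x₂ hx₂ (hAllGood x₂ hx₂)
  set T := max t₁ t₂ with hTdef
  have hT0 : 0 ≤ T := le_trans ht₁0 (le_max_left _ _)
  have hd1 : (x₁, T) ∈ F.dom := aux_glob hdf hC1 F hc hb hx₁ T hT0
  have hd2 : (x₂, T) ∈ F.dom := aux_glob hdf hC1 F hc hb hx₂ T hT0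
  have hz1 : F.flow x₁ T ∈ e.source := by
    refine (hball2 (Metric.ball_subset_ball ?_ (ht₁ T (le_max_left _ _)))).1
    linarith
  have hz2 : F.flow x₂ T ∈ e.source := by
    refine (hball2 (Metric.ball_subset_ball ?_ (ht₂ T (le_max_right _ _)))).1
    linarith
  have hfeq : f (F.flow x₁ T) = f (F.flow x₂ T) := by
    rw [F.lifts _ hd1, F.lifts _ hd2, hf12]
  have hzeq : F.flow x₁ T = F.flow x₂ T := by
    have h1 : e.symm (f (F.flow x₁ T)) = F.flow x₁ T := by exact e.left_inv hz1
    have h2 : e.symm (f (F.flow x₂ T)) = F.flow x₂ T := by exact e.left_inv hz2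
    rw [← h1, ← h2, hfeq]
  have hback : ∀ x', x' ∈ Metric.ball x₀ r₀ → (x', T) ∈ F.dom →
      F.flow (F.flow x' T) (-T) = x' := by
    intro x' hx' hdx
    have h0 : (x', T + -T) ∈ F.dom := by
      rw [add_neg_cancel]; exact F.zero_mem x' hx'
    obtain ⟨-, h⟩ := F.flow_add x' T (-T) hdx h0
    rw [h, add_neg_cancel, F.flow_zero x' hx']
  have e1 := hback x₁ hx₁ hd1
  have e2 := hback x₂ hx₂ hd2
  rw [← e1, ← e2, hzeq]
private lemma aux_star
    (hdf : ∀ x ∈ Metric.ball x₀ r₀, HasFDerivAt f (f' x : X →L[ℝ] Y) x)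
    (hC1 : ContinuousOn (fun x : X => ((f' x : X →L[ℝ] Y))) (Metric.ball x₀ r₀))
    (F : AuxFlow (Metric.ball x₀ r₀) f x₀)
    (hc : ∀ B : Set X, IsClosed B → Bornology.IsBounded B → B ⊆ Metric.ball x₀ r₀ →
      ∀ x ∈ B, (∀ t : ℝ, 0 ≤ t → (x, t) ∈ F.dom → F.flow x t ∈ B) →
        ∀ t : ℝ, 0 ≤ t → (x, t) ∈ F.dom)
    (hb : ∀ z ∈ Metric.ball x₀ r₀, (0 : ℝ) ≤ inner ℝ (z - x₀) ((f' z).symm (f z - f x₀))) :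
    ∀ r : ℝ, 0 < r → r ≤ r₀ → ∀ y ∈ f '' Metric.ball x₀ r, ∀ s ∈ Set.Icc (0:ℝ) 1,
      f x₀ + s • (y - f x₀) ∈ f '' Metric.ball x₀ r := by
  intro r hr hrr₀ y hy s hs
  obtain ⟨w, hw, rfl⟩ := hy
  rcases eq_or_lt_of_le hs.1 with h0 | h0
  · refine ⟨x₀, Metric.mem_ball_self hr, ?_⟩
    rw [← h0]; simp
  · set t := -Real.log s with htdef
    have ht0 : 0 ≤ t := by
      rw [htdef, neg_nonneg]
      exact Real.log_nonpos (le_of_lt h0) hs.2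
    have hwD : w ∈ Metric.ball x₀ r₀ := Metric.ball_subset_ball hrr₀ hw
    have hdom : (w, t) ∈ F.dom := aux_glob hdf hC1 F hc hb hwD t ht0
    have hexp : Real.exp (-t) = s := by rw [htdef, neg_neg, Real.exp_log h0]
    refine ⟨F.flow w t, ?_, ?_⟩
    · rw [Metric.mem_ball, dist_eq_norm]
      have h1 := aux_anti hdf hC1 F hb hwD (F.zero_mem w hwD) hdom ht0
      rw [F.flow_zero w hwD] at h1
      have h2 : ‖w - x₀‖ < r := by rw [← dist_eq_norm]; exact hw
      linarith
    · rw [F.lifts _ hdom, hexp]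

private lemma aux_forward
    (hdf : ∀ x ∈ Metric.ball x₀ r₀, HasFDerivAt f (f' x : X →L[ℝ] Y) x)
    (hC1 : ContinuousOn (fun x : X => ((f' x : X →L[ℝ] Y))) (Metric.ball x₀ r₀))
    (hinj : Set.InjOn f (Metric.ball x₀ r₀))
    (hstar : ∀ r : ℝ, 0 < r → r ≤ r₀ → ∀ y ∈ f '' Metric.ball x₀ r, ∀ s ∈ Set.Icc (0:ℝ) 1,
      f x₀ + s • (y - f x₀) ∈ f '' Metric.ball x₀ r)
    {x : X} (hx : x ∈ Metric.ball x₀ r₀) :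
    (0:ℝ) ≤ inner ℝ (x - x₀) ((f' x).symm (f x - f x₀)) := by
  have hsx : HasStrictFDerivAt f (f' x : X →L[ℝ] Y) x := aux_strict hdf hC1 hx
  set g : Y → X := hsx.localInverse f (f' x) x with hgdef
  set c : ℝ → Y := fun s => f x₀ + s • (f x - f x₀) with hcdef
  have hc1 : c 1 = f x := by rw [hcdef]; simp
  have hccont : Continuous c := continuous_const.add (continuous_id.smul continuous_const)
  set z : ℝ → X := fun s => g (c s) with hzdef
  have hz1 : z 1 = x := by
    rw [hzdef]
    simp only
    rw [hc1, hgdef]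
    exact hsx.localInverse_apply_image
  have hev1 : ∀ᶠ s in 𝓝 (1:ℝ), f (z s) = c s := by
    have h1 : Tendsto c (𝓝 1) (𝓝 (f x)) := by
      rw [← hc1]; exact hccont.continuousAt
    exact h1.eventually hsx.eventually_right_inverse
  have hzc : ContinuousAt z 1 := by
    have h2 : ContinuousAt g (c 1) := by rw [hc1]; exact hsx.localInverse_continuousAt
    exact h2.comp (x := (1:ℝ)) hccont.continuousAt
  have hev2 : ∀ᶠ s in 𝓝 (1:ℝ), z s ∈ Metric.ball x₀ r₀ := by
    refine hzc.eventually_mem ?_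
    rw [hz1]
    exact Metric.isOpen_ball.mem_nhds hx
  obtain ⟨δ, hδpos, hδ⟩ := Metric.eventually_nhds_iff.mp (hev1.and hev2)
  set δ' := min δ 1 with hδ'def
  have hδ'pos : 0 < δ' := lt_min hδpos one_pos
  have hδ'le : δ' ≤ 1 := min_le_right _ _
  have hδ'leδ : δ' ≤ δ := min_le_left _ _
  have hkey : ∀ s : ℝ, 1 - δ' < s → s ≤ 1 → ‖z s - x₀‖ ≤ ‖x - x₀‖ := by
    intro s h1 h2
    have hds : dist s 1 < δ := by
      rw [Real.dist_eq, abs_of_nonpos (by linarith)]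
      linarith
    obtain ⟨hfz, hzball⟩ := hδ hds
    have hsIcc : s ∈ Icc (0:ℝ) 1 := ⟨by linarith, h2⟩
    by_contra hgt
    push_neg at hgt
    set r := min r₀ ((‖x - x₀‖ + ‖z s - x₀‖) / 2) with hrdef
    have hxr : ‖x - x₀‖ < r := by
      rw [hrdef]
      refine lt_min ?_ (by linarith)
      rw [← dist_eq_norm]; exact hx
    have hrpos : 0 < r := lt_of_le_of_lt (norm_nonneg _) hxr
    have hrle : r ≤ r₀ := min_le_left _ _
    have hyim : f x ∈ f '' Metric.ball x₀ r :=
      ⟨x, by rw [Metric.mem_ball, dist_eq_norm]; exact hxr, rfl⟩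
    obtain ⟨w, hwr, hfw⟩ := hstar r hrpos hrle (f x) hyim s hsIcc
    have hwz : z s = w := by
      refine hinj hzball (Metric.ball_subset_ball hrle hwr) ?_
      rw [hfz]; exact hfw.symm
    have hzr : ‖z s - x₀‖ < r := by
      rw [← dist_eq_norm, ← Metric.mem_ball, hwz]
      exact hwr
    have hravg : r ≤ (‖x - x₀‖ + ‖z s - x₀‖) / 2 := min_le_right _ _
    linarith
  have hcder : HasDerivAt c (f x - f x₀) 1 := by
    rw [hcdef]
    simpa using ((hasDerivAt_id (1:ℝ)).smul_const (f x - f x₀)).const_add (f x₀)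
  have hzder : HasDerivAt z (((f' x).symm : Y →L[ℝ] X) (f x - f x₀)) 1 := by
    refine HasFDerivAt.comp_hasDerivAt 1 ?_ hcder
    rw [hc1]
    exact hsx.to_localInverse.hasFDerivAt
  have hu := hzder.sub_const x₀
  have hipd := hu.inner ℝ hu
  set Dv := ((f' x).symm : Y →L[ℝ] X) (f x - f x₀) with hDvdef
  have hnn : (0:ℝ) ≤ (inner ℝ (z 1 - x₀) Dv : ℝ) + (inner ℝ Dv (z 1 - x₀) : ℝ) := by
    have hws := hipd.hasDerivWithinAt (s := Iio 1)
    rw [hasDerivWithinAt_iff_tendsto_slope] at hws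
    have hIio : (Iio (1:ℝ)) \ {1} = Iio 1 := diff_singleton_eq_self (by simp)
    rw [hIio] at hws
    refine ge_of_tendsto hws ?_
    have hmem : Ioo (1 - δ') 1 ∈ 𝓝[<] (1:ℝ) :=
      Ioo_mem_nhdsLT_of_mem (by constructor <;> linarith)
    filter_upwards [hmem] with s hs
    have h2 : s ≤ 1 := le_of_lt hs.2
    have hle := hkey s hs.1 h2
    have hglen : (inner ℝ (z s - x₀) (z s - x₀) : ℝ) ≤ (inner ℝ (z 1 - x₀) (z 1 - x₀) : ℝ) := by
      rw [real_inner_self_eq_norm_mul_norm, real_inner_self_eq_norm_mul_norm, hz1]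
      nlinarith [norm_nonneg (z s - x₀), norm_nonneg (x - x₀)]
    rw [slope_def_field]
    apply div_nonneg_of_nonpos
    · simpa using sub_nonpos.mpr hglen
    · linarith [hs.2]
  rw [hz1] at hnn
  have h9 : (inner ℝ Dv (x - x₀) : ℝ) = (inner ℝ (x - x₀) Dv : ℝ) := real_inner_comm _ _
  rw [h9] at hnn
  have h10 : Dv = (f' x).symm (f x - f x₀) := by
    rw [hDvdef]; rfl
  rw [h10] at hnn
  linarith

end Aux

/-- Criterion of injectivity on a ball (Proposition 2.5): for a `C¹` local
diffeomorphism `f` on a ball `B(x₀;r₀)` of a Hilbert space, satisfying condition (c)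
for the auxiliary flow, the following are equivalent:
(a) `f` is injective on `B(x₀;r₀)` and `f(B(x₀;r))` is star-shaped with respect to
`f(x₀)` for every `0 < r ≤ r₀`;
(b) `⟨x - x₀, f'(x)⁻¹(f(x) - f(x₀))⟩ ≥ 0` for all `x ∈ B(x₀;r₀)`. -/
theorem ball_injectivity_criterion {X Y : Type*}
    [NormedAddCommGroup X] [InnerProductSpace ℝ X] [CompleteSpace X]
    [NormedAddCommGroup Y] [NormedSpace ℝ Y] [CompleteSpace Y]
    (x₀ : X) (r₀ : ℝ) (hr₀ : 0 < r₀)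
    (f : X → Y) (f' : X → (X ≃L[ℝ] Y))
    (hdf : ∀ x ∈ Metric.ball x₀ r₀, HasFDerivAt f (f' x : X →L[ℝ] Y) x)
    (hC1 : ContinuousOn (fun x : X => ((f' x : X →L[ℝ] Y))) (Metric.ball x₀ r₀))
    (F : AuxFlow (Metric.ball x₀ r₀) f x₀)
    (hc : ∀ B : Set X, IsClosed B → Bornology.IsBounded B → B ⊆ Metric.ball x₀ r₀ →
      ∀ x ∈ B, (∀ t : ℝ, 0 ≤ t → (x, t) ∈ F.dom → F.flow x t ∈ B) →
        ∀ t : ℝ, 0 ≤ t → (x, t) ∈ F.dom) :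
    (Set.InjOn f (Metric.ball x₀ r₀) ∧
      ∀ r : ℝ, 0 < r → r ≤ r₀ →
        ∀ y ∈ f '' Metric.ball x₀ r, ∀ s ∈ Set.Icc (0 : ℝ) 1,
          f x₀ + s • (y - f x₀) ∈ f '' Metric.ball x₀ r) ↔
    ∀ x ∈ Metric.ball x₀ r₀,
      (0 : ℝ) ≤ inner ℝ (x - x₀) ((f' x).symm (f x - f x₀)) := by
  constructor
  · rintro ⟨hinj, hstar⟩ x hx
    exact aux_forward hdf hC1 hinj hstar hx
  · intro hb
    exact ⟨aux_inj hr₀ hdf hC1 F hc hb, aux_star hdf hC1 F hc hb⟩
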